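/- arXiv:math-ph/0510058 — 2 statements merged into one kernel-verified Lean document; each statement's English description precedes it below -/
import Mathlib

section
/- Let A be an n×n Hermitian matrix with eigenvalues E^{(1)},...,E^{(n)} and an orthonormal basis of eigenvectors Ψ^{(1)},...,Ψ^{(n)}. Then for any E ∈ ℝ, η > 0, and any orthonormal basis e_1,...,e_n of ℂ^n, Σ_{k=1}^n |⟨(A − E − iη)^{-1} e_k, e_k⟩|^2 ≥ Σ_{j=1}^n (Σ_{k=1}^n |⟨e_k, Ψ^{(j)}⟩|^4) · (Im (E^{(j)} − E − iη)^{-1})^2. -/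
open Matrix Finset

/-- Lemma 5.14: lower bound for the sum of squares of diagonal resolvent matrix
elements in terms of eigenvector overlaps. -/
theorem resolvent_diagonal_lower_bound (n : ℕ) (A : Matrix (Fin n) (Fin n) ℂ)
    (hA : A.IsHermitian) (Ev : Fin n → ℝ) (Ψ e : Fin n → (Fin n → ℂ))
    (hΨon : ∀ j l, star (Ψ j) ⬝ᵥ Ψ l = if j = l then 1 else 0)
    (heon : ∀ k l, star (e k) ⬝ᵥ e l = if k = l then 1 else 0)
    (heig : ∀ j, A.mulVec (Ψ j) = (Ev j : ℂ) • Ψ j)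
    (E η : ℝ) (hη : 0 < η) :
    ∑ j, (∑ k, ‖star (e k) ⬝ᵥ Ψ j‖ ^ 4) *
        ((((Ev j : ℂ) - E - η * Complex.I)⁻¹).im) ^ 2
      ≤ ∑ k, ‖star (e k) ⬝ᵥ
          (A - ((E : ℂ) + η * Complex.I) • (1 : Matrix (Fin n) (Fin n) ℂ))⁻¹.mulVec (e k)‖ ^ 2 := by
  classical
  set z : ℂ := (E : ℂ) + η * Complex.I with hz
  set d : Fin n → ℂ := fun j => (Ev j : ℂ) - E - η * Complex.I with hd
  have hdgoal : ∀ j, ((Ev j : ℂ) - E - η * Complex.I) = d j := fun j => rfl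
  have hdim : ∀ j, (d j).im = -η := by intro j; simp [hd]
  have hdne : ∀ j, d j ≠ 0 := by
    intro j h
    have h2 := hdim j
    rw [h] at h2
    simp only [Complex.zero_im] at h2
    linarith
  have hdinv_pos : ∀ j, 0 < ((d j)⁻¹).im := by
    intro j
    rw [Complex.inv_im, hdim]
    have hp : 0 < Complex.normSq (d j) := Complex.normSq_pos.2 (hdne j)
    rw [neg_neg]
    positivity
  set U : Matrix (Fin n) (Fin n) ℂ := Matrix.of (fun i j => Ψ j i) with hUdef
  have hUHU : Uᴴ * U = 1 := by
    ext j l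
    simpa [Matrix.mul_apply, Matrix.conjTranspose_apply, Matrix.one_apply, dotProduct,
      hUdef] using hΨon j l
  have hUUH : U * Uᴴ = 1 := mul_eq_one_comm.mp hUHU
  have hAU : A * U = U * diagonal (fun j => (Ev j : ℂ)) := by
    ext i j
    rw [Matrix.mul_diagonal]
    have h1 := congrFun (heig j) i
    simp only [Matrix.mulVec, dotProduct, Pi.smul_apply, smul_eq_mul] at h1
    simpa [Matrix.mul_apply, hUdef, mul_comm] using h1
  have hzU : z • U = U * diagonal (fun _ : Fin n => z) := by
    ext i j
    rw [Matrix.mul_diagonal]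
    simp [mul_comm]
  have hMU : (A - z • 1) * U = U * diagonal d := by
    rw [sub_mul, Matrix.smul_mul, Matrix.one_mul, hAU, hzU, ← Matrix.mul_sub,
      Matrix.diagonal_sub,
      show (fun i => ((Ev i : ℂ)) - z) = d from funext fun j => by
        simp only [hd, hz]; ring]
  have key : (A - z • 1) * (U * diagonal (fun j => (d j)⁻¹) * Uᴴ) = 1 := by
    rw [Matrix.mul_assoc U (diagonal fun j => (d j)⁻¹) Uᴴ,
      ← Matrix.mul_assoc (A - z • 1) U _, hMU,
      Matrix.mul_assoc U (diagonal d) _,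
      ← Matrix.mul_assoc (diagonal d) (diagonal fun j => (d j)⁻¹) Uᴴ,
      Matrix.diagonal_mul_diagonal]
    simp only [fun j => mul_inv_cancel₀ (hdne j)]
    rw [Matrix.diagonal_one, Matrix.one_mul, hUUH]
  have hinv : (A - z • 1)⁻¹ = U * diagonal (fun j => (d j)⁻¹) * Uᴴ :=
    Matrix.inv_eq_right_inv key
  have hconj : ∀ k j, star (Ψ j) ⬝ᵥ e k = (starRingEnd ℂ) (star (e k) ⬝ᵥ Ψ j) := by
    intro k j
    simp only [dotProduct, Pi.star_apply, map_sum, Complex.star_def]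
    exact Finset.sum_congr rfl fun i _ => by simp [mul_comm]
  have expand : ∀ k (w : Fin n → ℂ),
      star (e k) ⬝ᵥ (U *ᵥ w) = ∑ j, (star (e k) ⬝ᵥ Ψ j) * w j := by
    intro k w
    simp only [Matrix.mulVec, dotProduct, hUdef, Matrix.of_apply, Pi.star_apply,
      Finset.mul_sum]
    rw [Finset.sum_comm]
    refine Finset.sum_congr rfl fun j _ => ?_
    rw [Finset.sum_mul]
    exact Finset.sum_congr rfl fun i _ => by ring
  have hG : ∀ k, star (e k) ⬝ᵥ ((A - z • 1)⁻¹).mulVec (e k)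
      = ∑ j, ((‖star (e k) ⬝ᵥ Ψ j‖ ^ 2 : ℝ) : ℂ) * (d j)⁻¹ := by
    intro k
    have hUc : Uᴴ *ᵥ (e k) = fun j => star (Ψ j) ⬝ᵥ e k := by
      ext j
      simp [Matrix.mulVec, dotProduct, Matrix.conjTranspose_apply, hUdef]
    rw [hinv, ← Matrix.mulVec_mulVec, ← Matrix.mulVec_mulVec, hUc, expand]
    refine Finset.sum_congr rfl fun j _ => ?_
    simp only [Matrix.mulVec_diagonal]
    rw [hconj]
    rw [show star (e k) ⬝ᵥ Ψ j * ((d j)⁻¹ * (starRingEnd ℂ) (star (e k) ⬝ᵥ Ψ j))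
        = ((star (e k) ⬝ᵥ Ψ j) * (starRingEnd ℂ) (star (e k) ⬝ᵥ Ψ j)) * (d j)⁻¹ from by ring]
    rw [Complex.mul_conj]
    norm_cast
    rw [Complex.sq_norm]
  have hGim : ∀ k, (star (e k) ⬝ᵥ ((A - z • 1)⁻¹).mulVec (e k)).im
      = ∑ j, ‖star (e k) ⬝ᵥ Ψ j‖ ^ 2 * ((d j)⁻¹).im := by
    intro k
    rw [hG k, Complex.im_sum]
    exact Finset.sum_congr rfl fun j _ => by simp [Complex.mul_im, ← Complex.ofReal_pow]
  simp only [hdgoal]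
  have step1 : ∑ j, (∑ k, ‖star (e k) ⬝ᵥ Ψ j‖ ^ 4) * ((d j)⁻¹.im) ^ 2
      = ∑ k, ∑ j, ‖star (e k) ⬝ᵥ Ψ j‖ ^ 4 * ((d j)⁻¹.im) ^ 2 := by
    simp_rw [Finset.sum_mul]
    exact Finset.sum_comm
  rw [step1]
  refine Finset.sum_le_sum fun k _ => ?_
  have h2 : ∀ j, (‖star (e k) ⬝ᵥ Ψ j‖ ^ 2 * ((d j)⁻¹).im) ^ 2
      = ‖star (e k) ⬝ᵥ Ψ j‖ ^ 4 * ((d j)⁻¹.im) ^ 2 := fun j => by ring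
  have h1 : ∑ j, (‖star (e k) ⬝ᵥ Ψ j‖ ^ 2 * ((d j)⁻¹).im) ^ 2
      ≤ (∑ j, ‖star (e k) ⬝ᵥ Ψ j‖ ^ 2 * ((d j)⁻¹).im) ^ 2 :=
    Finset.sum_sq_le_sq_sum_of_nonneg fun j _ => mul_nonneg (sq_nonneg _) (hdinv_pos j).le
  set G : ℂ := star (e k) ⬝ᵥ ((A - z • 1)⁻¹).mulVec (e k) with hGdef
  have h3 : (G.im) ^ 2 ≤ ‖G‖ ^ 2 := by
    have h4 : |G.im| ^ 2 ≤ ‖G‖ ^ 2 :=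
      pow_le_pow_left₀ (abs_nonneg _) (Complex.abs_im_le_norm G) 2
    rwa [sq_abs] at h4
  calc ∑ j, ‖star (e k) ⬝ᵥ Ψ j‖ ^ 4 * ((d j)⁻¹.im) ^ 2
      = ∑ j, (‖star (e k) ⬝ᵥ Ψ j‖ ^ 2 * ((d j)⁻¹).im) ^ 2 := by
        exact Finset.sum_congr rfl fun j _ => (h2 j).symm
    _ ≤ (∑ j, ‖star (e k) ⬝ᵥ Ψ j‖ ^ 2 * ((d j)⁻¹).im) ^ 2 := h1
    _ = (G.im) ^ 2 := by rw [← hGim k]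
    _ ≤ ‖G‖ ^ 2 := h3
end

section
/- Let φ be an analytic function on the disk D(0, r) ⊂ ℂ and η > 0. Then the two-dimensional Lebesgue measure of the set {w ∈ ℂ : w = φ(z) for some z ∈ D(0,r) with |φ'(z)| < η} is at most π r² η². -/
open MeasureTheory

lemma det_restrictScalars_smul_one (c : ℂ) :
    ((c • (1 : ℂ →L[ℂ] ℂ)).restrictScalars ℝ).det = Complex.normSq c := by
  have h : (((c • (1 : ℂ →L[ℂ] ℂ)).restrictScalars ℝ : ℂ →L[ℝ] ℂ) : ℂ →ₗ[ℝ] ℂ)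
      = Algebra.lmul ℝ ℂ c := by
    ext w
    simp [mul_comm]
  rw [ContinuousLinearMap.det, h]
  exact Algebra.norm_complex_apply c

/-- Sard-type area estimate: the image of the near-critical set
{z ∈ D(0,r) : |φ'(z)| < η} under an analytic map φ has area at most πr²η². -/
theorem analytic_near_critical_image_area (φ : ℂ → ℂ) (r η : ℝ)
    (hr : 0 < r) (hη : 0 < η)
    (hφ : ∀ z ∈ Metric.ball (0 : ℂ) r, AnalyticAt ℂ φ z) :
    volume (φ '' {z ∈ Metric.ball (0 : ℂ) r | ‖deriv φ z‖ < η})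
      ≤ ENNReal.ofReal (Real.pi * r ^ 2 * η ^ 2) := by
  set s : Set ℂ := {z ∈ Metric.ball (0 : ℂ) r | ‖deriv φ z‖ < η} with hs_def
  have hs : MeasurableSet s := by
    apply measurableSet_ball.inter
    exact (measurable_deriv φ).norm measurableSet_Iio
  set f' : ℂ → ℂ →L[ℝ] ℂ := fun z => ((deriv φ z) • (1 : ℂ →L[ℂ] ℂ)).restrictScalars ℝ with hf'_def
  have hderiv : ∀ z ∈ s, HasFDerivWithinAt φ (f' z) s z := by
    intro z hz
    have h1 : HasDerivAt φ (deriv φ z) z := ((hφ z hz.1).differentiableAt).hasDerivAt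
    have h2 : HasFDerivAt φ (f' z) z := by
      have := h1.hasFDerivAt.restrictScalars ℝ
      refine this.congr_fderiv ?_
      ext w
      simp [f', mul_comm]
    exact h2.hasFDerivWithinAt
  calc volume (φ '' s)
      ≤ ∫⁻ z in s, ENNReal.ofReal |(f' z).det| ∂volume :=
        addHaar_image_le_lintegral_abs_det_fderiv volume hs hderiv
    _ ≤ ∫⁻ _ in s, ENNReal.ofReal (η ^ 2) ∂volume := by
        apply lintegral_mono_ae
        filter_upwards [ae_restrict_mem hs] with z hz
        apply ENNReal.ofReal_le_ofReal
        rw [det_restrictScalars_smul_one, abs_of_nonneg (Complex.normSq_nonneg _),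
          Complex.normSq_eq_norm_sq]
        exact pow_le_pow_left₀ (norm_nonneg _) hz.2.le 2
    _ = ENNReal.ofReal (η ^ 2) * volume s := by
        rw [lintegral_const, Measure.restrict_apply_univ]
    _ ≤ ENNReal.ofReal (η ^ 2) * volume (Metric.ball (0 : ℂ) r) := by
        gcongr
        exact Set.sep_subset _ _
    _ = ENNReal.ofReal (Real.pi * r ^ 2 * η ^ 2) := by
        rw [Complex.volume_ball]
        rw [show Real.pi * r ^ 2 * η ^ 2 = η ^ 2 * (r ^ 2 * Real.pi) by ring,
          ENNReal.ofReal_mul (by positivity), ENNReal.ofReal_mul (by positivity),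
          ENNReal.ofReal_pow hr.le]
        rw [← NNReal.coe_real_pi, ENNReal.ofReal_coe_nnreal]
end
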